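/- Let G be an n-vertex k-uniform hypergraph (k ≥ 2), C > 1, and 0 < p ≤ 1. If for all 1 ≤ r ≤ d and all families of r distinct (k−1)-element vertex sets S_1, …, S_r we have |N_G(S_1) ∩ … ∩ N_G(S_r)| ≤ C·n·p^r, then for every 1 ≤ i ≤ k−1, for all 1 ≤ r ≤ d, and all families of r distinct i-element vertex sets T_1, …, T_r, we have |N_G(T_1) ∩ … ∩ N_G(T_r)| ≤ C·n^{k−i}·p^r. -/

import Mathlib

open scoped Classical

/-- BDD for `(k-1)`-sets implies BDD_i for all `1 ≤ i ≤ k-1`: if all common neighbourhoods of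
`r ≤ d` distinct `(k-1)`-sets have size at most `C·n·pʳ`, then all common neighbourhoods of
`r ≤ d` distinct `i`-sets have size at most `C·n^{k-i}·pʳ`. -/
theorem stmt2 (k n d : ℕ) (hk : 2 ≤ k) (C p : ℝ) (hC : 1 < C) (hp0 : 0 < p) (hp1 : p ≤ 1)
    (E : Finset (Finset (Fin n))) (hunif : ∀ e ∈ E, e.card = k)
    (hbdd : ∀ r : ℕ, 1 ≤ r → r ≤ d → ∀ 𝒮 : Finset (Finset (Fin n)),
      𝒮.card = r → (∀ S ∈ 𝒮, S.card = k - 1) →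
      ((((Finset.univ : Finset (Fin n)).powersetCard (k - (k - 1))).filter
          (fun T => ∀ S ∈ 𝒮, S ∪ T ∈ E)).card : ℝ) ≤ C * n * p ^ r) :
    ∀ i : ℕ, 1 ≤ i → i ≤ k - 1 → ∀ r : ℕ, 1 ≤ r → r ≤ d → ∀ 𝒯 : Finset (Finset (Fin n)),
      𝒯.card = r → (∀ S ∈ 𝒯, S.card = i) →
      ((((Finset.univ : Finset (Fin n)).powersetCard (k - i)).filter
          (fun T => ∀ S ∈ 𝒯, S ∪ T ∈ E)).card : ℝ) ≤ C * (n : ℝ) ^ (k - i) * p ^ r := by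
  intro i hi1 hi2 r hr1 hr2
  obtain ⟨m, hm⟩ : ∃ m, i + m = k - 1 := ⟨k - 1 - i, by omega⟩
  clear hi2
  induction m generalizing i with
  | zero =>
    intro 𝒯 h𝒯r h𝒯i
    have hik : i = k - 1 := by omega
    subst hik
    have hb := hbdd r hr1 hr2 𝒯 h𝒯r h𝒯i
    have h1 : k - (k - 1) = 1 := by omega
    calc ((((Finset.univ : Finset (Fin n)).powersetCard (k - (k - 1))).filter
          (fun T => ∀ S ∈ 𝒯, S ∪ T ∈ E)).card : ℝ) ≤ C * n * p ^ r := hb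
      _ = C * (n : ℝ) ^ (k - (k - 1)) * p ^ r := by rw [h1, pow_one]
  | succ m ih =>
    intro 𝒯 h𝒯r h𝒯i
    set A := ((Finset.univ : Finset (Fin n)).powersetCard (k - i)).filter
        (fun T => ∀ S ∈ 𝒯, S ∪ T ∈ E) with hA
    have hik : i + 1 ≤ k - 1 := by omega
    have hTA : ∀ T ∈ A, T.card = k - i ∧ ∀ S ∈ 𝒯, S ∪ T ∈ E := by
      intro T hT
      rw [hA, Finset.mem_filter, Finset.mem_powersetCard_univ] at hT
      exact ⟨hT.1, hT.2⟩
    have hdisj : ∀ T ∈ A, ∀ S ∈ 𝒯, Disjoint S T := by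
      intro T hT S hS
      have hE := (hTA T hT).2 S hS
      have hck : (S ∪ T).card = k := hunif _ hE
      rw [← Finset.card_union_eq_card_add_card, hck, h𝒯i S hS, (hTA T hT).1]
      omega
    -- counting identity
    have hsum : ∑ v : Fin n, (A.filter (fun T => v ∈ T)).card = A.card * (k - i) := by
      calc ∑ v : Fin n, (A.filter (fun T => v ∈ T)).card
          = ∑ v : Fin n, ∑ T ∈ A, if v ∈ T then 1 else 0 := by
            refine Finset.sum_congr rfl fun v _ => ?_
            exact Finset.card_filter _ _
        _ = ∑ T ∈ A, ∑ v : Fin n, if v ∈ T then 1 else 0 := Finset.sum_comm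
        _ = ∑ T ∈ A, T.card := by
            refine Finset.sum_congr rfl fun T _ => ?_
            rw [← Finset.card_filter]
            simp
        _ = ∑ _T ∈ A, (k - i) := Finset.sum_congr rfl fun T hT => (hTA T hT).1
        _ = A.card * (k - i) := by rw [Finset.sum_const, smul_eq_mul]
    -- per-vertex bound
    have hperv : ∀ v : Fin n, ((A.filter (fun T => v ∈ T)).card : ℝ)
        ≤ C * (n : ℝ) ^ (k - (i + 1)) * p ^ r := by
      intro v
      by_cases hne : (A.filter (fun T => v ∈ T)).Nonempty
      · obtain ⟨T0, hT0⟩ := hne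
        rw [Finset.mem_filter] at hT0
        have hv𝒯 : ∀ S ∈ 𝒯, v ∉ S := fun S hS hv =>
          (Finset.disjoint_left.mp (hdisj T0 hT0.1 S hS)) hv hT0.2
        set 𝒯' := 𝒯.image (fun S => insert v S) with h𝒯'
        have h𝒯'r : 𝒯'.card = r := by
          rw [h𝒯', Finset.card_image_of_injOn, h𝒯r]
          intro S hS S' hS' h
          have := congrArg (fun X => Finset.erase X v) h
          simpa [Finset.erase_insert (hv𝒯 S hS), Finset.erase_insert (hv𝒯 S' hS')] using this
        have h𝒯'i : ∀ S' ∈ 𝒯', S'.card = i + 1 := by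
          intro S' hS'
          obtain ⟨S, hS, rfl⟩ := Finset.mem_image.mp hS'
          rw [Finset.card_insert_of_notMem (hv𝒯 S hS), h𝒯i S hS]
        have hb := ih (i + 1) (by omega) (by omega) 𝒯' h𝒯'r h𝒯'i
        refine le_trans ?_ hb
        have hcard_le : (A.filter (fun T => v ∈ T)).card
            ≤ (((Finset.univ : Finset (Fin n)).powersetCard (k - (i + 1))).filter
              (fun T => ∀ S ∈ 𝒯', S ∪ T ∈ E)).card := by
          apply Finset.card_le_card_of_injOn (fun T => T.erase v)
          · intro T hT
            rw [Finset.mem_coe, Finset.mem_filter] at hT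
            obtain ⟨hTA', hvT⟩ := hT
            rw [Finset.mem_coe, Finset.mem_filter, Finset.mem_powersetCard_univ]
            constructor
            · rw [Finset.card_erase_of_mem hvT, (hTA T hTA').1]
              omega
            · intro S' hS'
              obtain ⟨S, hS, rfl⟩ := Finset.mem_image.mp hS'
              have : insert v S ∪ T.erase v = S ∪ T := by
                rw [Finset.insert_union, ← Finset.union_insert, Finset.insert_erase hvT]
              rw [this]
              exact (hTA T hTA').2 S hS
          · intro T1 h1 T2 h2 h
            rw [Finset.mem_coe, Finset.mem_filter] at h1 h2
            simp only at h
            rw [← Finset.insert_erase h1.2, h, Finset.insert_erase h2.2]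
        exact_mod_cast hcard_le
      · rw [Finset.not_nonempty_iff_eq_empty] at hne
        rw [hne]
        simp only [Finset.card_empty, Nat.cast_zero]
        positivity
    -- combine
    have hmain : (((k - i : ℕ) : ℝ)) * A.card ≤ C * (n : ℝ) ^ (k - i) * p ^ r := by
      have hcast : (((k - i : ℕ) : ℝ)) * A.card = ∑ v : Fin n, ((A.filter (fun T => v ∈ T)).card : ℝ) := by
        rw [← Nat.cast_sum]
        rw [hsum]
        push_cast
        ring
      rw [hcast]
      calc ∑ v : Fin n, ((A.filter (fun T => v ∈ T)).card : ℝ)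
          ≤ ∑ _v : Fin n, C * (n : ℝ) ^ (k - (i + 1)) * p ^ r :=
            Finset.sum_le_sum fun v _ => hperv v
        _ = (n : ℝ) * (C * (n : ℝ) ^ (k - (i + 1)) * p ^ r) := by
            rw [Finset.sum_const, Finset.card_univ, Fintype.card_fin, nsmul_eq_mul]
        _ = C * (n : ℝ) ^ (k - i) * p ^ r := by
            have : k - i = (k - (i + 1)) + 1 := by omega
            rw [this, pow_succ]
            ring
    have h1 : (1 : ℝ) ≤ ((k - i : ℕ) : ℝ) := by
      have : 1 ≤ k - i := by omega
      exact_mod_cast this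
    calc ((A.card : ℕ) : ℝ) = 1 * A.card := (one_mul _).symm
      _ ≤ ((k - i : ℕ) : ℝ) * A.card := by
          apply mul_le_mul_of_nonneg_right h1 (Nat.cast_nonneg _)
      _ ≤ C * (n : ℝ) ^ (k - i) * p ^ r := hmain
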